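/- Let (G,K) be a Gelfand pair of finite groups, with 1_K^G = ⊕_{r=0}^s V_r the multiplicity-free decomposition (V_0 trivial), d_r = dim V_r, spherical functions ω_r(x) = (1/|K|) Σ_{k∈K} χ^{(r)}(x^{-1}k), and double cosets K_0, ..., K_s with representatives g_0, ..., g_s (g_0 the identity). Fix t with 0 ≤ t ≤ s such that ω_t is real valued, fix u with 0 ≤ u ≤ s, and define L_t(ω_i, ω_j) = (d_j/|G|) Σ_{r=0}^s |K_r| ω_i(g_r) ω_t(g_r) conj(ω_j(g_r)). Then for every 0 ≤ i ≤ s: Σ_{j=0}^s L_t(ω_i, ω_j) ω_j(g_u) = ω_t(g_u) · ω_i(g_u). (Consequently, for the exchangeable pair built from the Plancherel measure and L_t, the random variable W(i) = (|K_u|/|K|)^{1/2} ω_i(g_u) satisfies E(W'|W) = ω_t(g_u) W.) -/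

import Mathlib

open scoped BigOperators Classical
open CategoryTheory

/-- `χ : G → ℂ` is an irreducible character of `G`. -/
def IsIrrChar (G : Type) [Group G] (χ : G → ℂ) : Prop :=
  ∃ V : FDRep ℂ G, Simple V ∧ χ = FDRep.character V

/-- The data of a Gelfand pair `(G, K)`: the induced representation `1_K^G` decomposes
multiplicity-freely as `⊕_{r=0}^s V_r` with `V_0` trivial, `χ r` and `d r` are the character
and dimension of `V_r`, and `g r` are representatives of the `s+1` double cosets of `K`
in `G`, with `g 0 = 1`. -/
structure GelfandPairData (G : Type) [Group G] [Fintype G] where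
  /-- the subgroup `K` -/
  K : Subgroup G
  /-- `s + 1` is the number of irreducible constituents of `1_K^G` -/
  s : ℕ
  /-- the irreducible characters of the constituents `V_r` -/
  χ : Fin (s + 1) → G → ℂ
  /-- the dimensions `d_r = dim V_r` -/
  d : Fin (s + 1) → ℕ
  /-- double coset representatives `g_0, …, g_s` -/
  g : Fin (s + 1) → G
  irr : ∀ r, IsIrrChar G (χ r)
  dim_eq : ∀ r, χ r 1 = (d r : ℂ)
  triv : χ 0 = fun _ => 1
  inj : Function.Injective χ
  /-- each `V_r` occurs in `1_K^G` with multiplicity exactly one -/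
  mult_one : ∀ r, (Nat.card K : ℂ)⁻¹ * (∑ᶠ k ∈ (K : Set G), χ r k) = 1
  /-- multiplicity-freeness/completeness: every irreducible character of `G` either does not
  occur in `1_K^G` or is one of the `χ r` -/
  gelfand : ∀ ψ : G → ℂ, IsIrrChar G ψ →
    (∑ᶠ k ∈ (K : Set G), ψ k) = 0 ∨ ∃ r, ψ = χ r
  g_zero : g 0 = 1
  /-- the double cosets `K g_r K` are pairwise distinct -/
  coset_disjoint : ∀ r t : Fin (s + 1), r ≠ t →
    Disjoint {x | ∃ k₁ ∈ K, ∃ k₂ ∈ K, x = k₁ * g r * k₂}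
      {x | ∃ k₁ ∈ K, ∃ k₂ ∈ K, x = k₁ * g t * k₂}
  /-- the double cosets `K g_r K` cover `G` -/
  coset_cover : ∀ x : G, ∃ r : Fin (s + 1), ∃ k₁ ∈ K, ∃ k₂ ∈ K, x = k₁ * g r * k₂

namespace GelfandPairData

variable {G : Type} [Group G] [Fintype G]

/-- The double coset `K_r = K g_r K`. -/
def DC (D : GelfandPairData G) (r : Fin (D.s + 1)) : Set G :=
  {x | ∃ k₁ ∈ D.K, ∃ k₂ ∈ D.K, x = k₁ * D.g r * k₂}

/-- The spherical function `ω_r(x) = (1/|K|) Σ_{k ∈ K} χ^{(r)}(x⁻¹ k)`. -/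
noncomputable def ω (D : GelfandPairData G) (r : Fin (D.s + 1)) (x : G) : ℂ :=
  (Nat.card D.K : ℂ)⁻¹ * ∑ᶠ k ∈ (D.K : Set G), D.χ r (x⁻¹ * k)

end GelfandPairData

/-- The Markov kernel on spherical functions:
`L_t(ω_i, ω_j) = (d_j/|G|) Σ_r |K_r| ω_i(g_r) ω_t(g_r) conj(ω_j(g_r))`. -/
noncomputable def GelfandPairData.L {G : Type} [Group G] [Fintype G] (D : GelfandPairData G)
    (t i j : Fin (D.s + 1)) : ℂ :=
  (D.d j : ℂ) / (Fintype.card G : ℂ) *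
    ∑ r : Fin (D.s + 1), (Set.ncard (D.DC r) : ℂ) * D.ω i (D.g r) * D.ω t (D.g r) *
      (starRingEnd ℂ) (D.ω j (D.g r))

section AuxTrace

/-- Sums of a periodic function over a shifted window agree. -/
private lemma sum_window' {M : Type*} [AddCommMonoid M] (n : ℕ) (F : ℕ → M)
    (hF : ∀ m, F (m + n) = F m) :
    ∀ j, ∑ l ∈ Finset.range n, F (j + l) = ∑ l ∈ Finset.range n, F l := by
  intro j
  induction j with
  | zero => simp
  | succ j ih =>
    rw [← ih]
    rcases n with _ | m
    · simp
    · rw [Finset.sum_range_succ' (fun l => F (j + l)) m, Finset.sum_range_succ]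
      have h1 : ∀ l, F (j + 1 + l) = F (j + (l + 1)) := by
        intro l; congr 1; omega
      have h2 : F (j + 1 + m) = F (j + 0) := by
        have : j + 1 + m = (j + 0) + (m + 1) := by omega
        rw [this, hF]
      simp only [h1, h2]
      have h3 : F (j + (m + 1)) = F (j + 0) := by
        have he : j + (m + 1) = (j + 0) + (m + 1) := by omega
        rw [he, hF]
      rw [h3]

private lemma root_sum' {n : ℕ} {ζ : ℂ} (hζ : IsPrimitiveRoot ζ n) (m : ℕ) :
    ∑ r ∈ Finset.range n, ζ ^ (m * r) = if n ∣ m then (n : ℂ) else 0 := by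
  have hterm : ∀ r, ζ ^ (m * r) = (ζ ^ m) ^ r := fun r => by rw [pow_mul]
  simp only [hterm]
  by_cases h : n ∣ m
  · have h1 : ζ ^ m = 1 := (hζ.pow_eq_one_iff_dvd m).mpr h
    simp [h1, h]
  · have h1 : ζ ^ m ≠ 1 := fun hc => h ((hζ.pow_eq_one_iff_dvd m).mp hc)
    rw [geom_sum_eq h1, if_neg h]
    have : (ζ ^ m) ^ n = 1 := by
      rw [← pow_mul, mul_comm, pow_mul, hζ.pow_eq_one, one_pow]
    rw [this]
    simp

private lemma conj_trace_of_pow_eq_one {V : Type} [AddCommGroup V] [Module ℂ V]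
    [FiniteDimensional ℂ V] (f : Module.End ℂ V) {n : ℕ} (hn : 0 < n) (hf : f ^ n = 1) :
    (starRingEnd ℂ) (LinearMap.trace ℂ V f) = LinearMap.trace ℂ V (f ^ (n - 1)) := by
  rcases eq_or_lt_of_le (show 1 ≤ n from hn) with h1 | h1
  · -- n = 1
    have hn1 : n = 1 := h1.symm
    subst hn1
    have hf1 : f = 1 := by rw [← pow_one f]; exact hf
    subst hf1
    simp only [one_pow, pow_one]
    rw [LinearMap.trace_one]
    exact map_natCast (starRingEnd ℂ) _
  · -- 2 ≤ n
    have h1n : 1 < n := h1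
    set ζ : ℂ := Complex.exp (2 * Real.pi * Complex.I / n) with hζdef
    have hζ : IsPrimitiveRoot ζ n := Complex.isPrimitiveRoot_exp n hn.ne'
    have hζn : ζ ^ n = 1 := hζ.pow_eq_one
    have hzred : ∀ a : ℕ, ζ ^ a = ζ ^ (a % n) := by
      intro a
      conv_lhs => rw [← Nat.div_add_mod a n, pow_add, pow_mul, hζn, one_pow, one_mul]
    have hfred : ∀ a : ℕ, f ^ a = f ^ (a % n) := by
      intro a
      conv_lhs => rw [← Nat.div_add_mod a n, pow_add, pow_mul, hf, one_pow, one_mul]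
    set P : ℕ → Module.End ℂ V :=
      fun r => (n : ℂ)⁻¹ • ∑ j ∈ Finset.range n, ζ ^ ((n-1) * (r * j)) • f ^ j with hP
    have hnz : (n : ℂ) ≠ 0 := Nat.cast_ne_zero.mpr hn.ne'
    have hidem : ∀ r, P r * P r = P r := by
      intro r
      set F : ℕ → Module.End ℂ V := fun m => ζ ^ ((n-1) * (r * m)) • f ^ m with hF
      have hper : ∀ m, F (m + n) = F m := by
        intro m
        simp only [hF]
        congr 1
        · rw [hzred ((n-1)*(r*(m+n))), hzred ((n-1)*(r*m))]
          congr 1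
          have he : (n-1) * (r * (m+n)) = (n-1)*(r*m) + ((n-1)*r)*n := by ring
          rw [he, Nat.add_mul_mod_self_right]
        · rw [hfred (m+n), hfred m, Nat.add_mod_right]
      have key : (∑ j ∈ Finset.range n, F j) * (∑ l ∈ Finset.range n, F l)
          = (n : ℂ) • ∑ m ∈ Finset.range n, F m := by
        rw [Finset.sum_mul_sum]
        have hFmul : ∀ j l : ℕ, F j * F l = F (j + l) := by
          intro j l
          simp only [hF, smul_mul_assoc, mul_smul_comm, smul_smul, ← pow_add]
          congr 2
          ring
        calc ∑ j ∈ Finset.range n, ∑ l ∈ Finset.range n, F j * F l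
            = ∑ j ∈ Finset.range n, ∑ l ∈ Finset.range n, F (j + l) := by
              exact Finset.sum_congr rfl fun j _ => Finset.sum_congr rfl fun l _ => hFmul j l
          _ = ∑ j ∈ Finset.range n, ∑ l ∈ Finset.range n, F l := by
              exact Finset.sum_congr rfl fun j _ => sum_window' n F hper j
          _ = (n : ℂ) • ∑ m ∈ Finset.range n, F m := by
              rw [Finset.sum_const, Finset.card_range, ← Nat.cast_smul_eq_nsmul ℂ]
      show ((n : ℂ)⁻¹ • ∑ j ∈ Finset.range n, F j) * ((n : ℂ)⁻¹ • ∑ l ∈ Finset.range n, F l)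
          = (n : ℂ)⁻¹ • ∑ j ∈ Finset.range n, F j
      rw [smul_mul_assoc, mul_smul_comm, smul_smul, key, smul_smul]
      congr 1
      field_simp
    have htr : ∀ r : ℕ, ∃ m : ℕ, LinearMap.trace ℂ V (P r) = (m : ℂ) := by
      intro r
      have hproj : LinearMap.IsProj (LinearMap.range (P r)) (P r) := by
        refine ⟨fun x => LinearMap.mem_range_self _ x, ?_⟩
        rintro x ⟨y, rfl⟩
        have := congrArg (fun g : Module.End ℂ V => g y) (hidem r)
        exact this
      exact ⟨_, hproj.trace⟩
    have hop : ∀ j, j < n → (∑ r ∈ Finset.range n, ζ ^ (r * j) • P r) = f ^ j := by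
      intro j hj
      have step1 : ∀ r : ℕ, ζ ^ (r * j) • P r
          = ∑ l ∈ Finset.range n, ((n : ℂ)⁻¹ * ζ ^ ((j + (n-1) * l) * r)) • f ^ l := by
        intro r
        simp only [hP]
        rw [smul_comm, Finset.smul_sum]
        rw [Finset.smul_sum]
        refine Finset.sum_congr rfl fun l _ => ?_
        rw [smul_smul, smul_smul]
        congr 1
        rw [mul_assoc, ← pow_add]
        congr 1
        ring
      rw [Finset.sum_congr rfl fun r _ => step1 r, Finset.sum_comm]
      have hcoef : ∀ l, l < n → (∑ r ∈ Finset.range n, ((n : ℂ)⁻¹ * ζ ^ ((j + (n-1) * l) * r)))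
          = if l = j then (1 : ℂ) else 0 := by
        intro l hl
        rw [← Finset.mul_sum, root_sum' hζ]
        have hkey : j + (n-1)*l + l = j + n*l := by
          have h2 : (n-1)*l + l = ((n-1)+1)*l := by ring
          rw [Nat.sub_add_cancel hn] at h2
          omega
        have hdvd : n ∣ (j + (n-1) * l) ↔ l = j := by
          constructor
          · rintro ⟨c, hc⟩
            have h2 : (j + n*l) % n = (n*c + l) % n := by
              rw [← hkey, hc]
            rw [Nat.add_mul_mod_self_left] at h2
            rw [Nat.add_comm, Nat.add_mul_mod_self_left] at h2
            rw [Nat.mod_eq_of_lt hj, Nat.mod_eq_of_lt hl] at h2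
            omega
          · rintro rfl
            refine ⟨l, ?_⟩
            omega
        by_cases hlj : l = j
        · rw [if_pos hlj, if_pos (hdvd.mpr hlj)]
          field_simp
        · rw [if_neg hlj, if_neg (fun hc => hlj (hdvd.mp hc)), mul_zero]
      calc ∑ l ∈ Finset.range n, ∑ r ∈ Finset.range n,
              ((n : ℂ)⁻¹ * ζ ^ ((j + (n-1) * l) * r)) • f ^ l
          = ∑ l ∈ Finset.range n, (if l = j then (1:ℂ) else 0) • f ^ l := by
            refine Finset.sum_congr rfl fun l hl => ?_
            rw [← Finset.sum_smul, hcoef l (Finset.mem_range.mp hl)]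
        _ = f ^ j := by
            simp only [ite_smul, one_smul, zero_smul]
            rw [Finset.sum_ite_eq' (Finset.range n) j (fun l => f ^ l),
              if_pos (Finset.mem_range.mpr hj)]
    have hinv : ∀ j, j < n → ∑ r ∈ Finset.range n, ζ ^ (r * j) • LinearMap.trace ℂ V (P r)
        = LinearMap.trace ℂ V (f ^ j) := by
      intro j hj
      rw [← hop j hj, map_sum]
      exact Finset.sum_congr rfl fun r _ => (map_smul (LinearMap.trace ℂ V) _ (P r)).symm
    have hz1 : (starRingEnd ℂ) ζ = ζ⁻¹ := by
      rw [hζdef, ← Complex.exp_conj, ← Complex.exp_neg]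
      congr 1
      rw [map_div₀, map_mul, map_mul, Complex.conj_I]
      rw [Complex.conj_ofNat]
      rw [Complex.conj_ofReal, map_natCast]
      ring
    have hconjζ : ∀ r : ℕ, (starRingEnd ℂ) (ζ ^ r) = ζ ^ (r * (n-1)) := by
      intro r
      rw [map_pow, hz1, inv_pow]
      apply inv_eq_of_mul_eq_one_left
      rw [← pow_add]
      have he : r * (n-1) + r = r * n := by
        have h2 : r * (n-1) + r = r * ((n-1) + 1) := by ring
        rw [h2, Nat.sub_add_cancel hn]
      rw [he, mul_comm r n, pow_mul, hζn, one_pow]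
    have e1 : LinearMap.trace ℂ V f
        = ∑ r ∈ Finset.range n, ζ ^ (r * 1) • LinearMap.trace ℂ V (P r) := by
      rw [hinv 1 h1n, pow_one]
    rw [e1, map_sum, ← hinv (n-1) (by omega)]
    refine Finset.sum_congr rfl fun r _ => ?_
    obtain ⟨m, hm⟩ := htr r
    rw [hm, smul_eq_mul, smul_eq_mul, map_mul, map_natCast, mul_one, hconjζ r]

end AuxTrace

section AuxChar

variable {G : Type} [Group G] [Fintype G]

/-- Complex conjugation of a character value is the character at the inverse. -/
private lemma conj_char (V : FDRep ℂ G) (g : G) :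
    (starRingEnd ℂ) (V.character g) = V.character g⁻¹ := by
  have hn : 0 < orderOf g := orderOf_pos g
  have hρ : (V.ρ g : V →ₗ[ℂ] V) ^ orderOf g = 1 := by
    rw [← map_pow, pow_orderOf_eq_one, map_one]
  have hinv : g⁻¹ = g ^ (orderOf g - 1) := by
    symm
    apply eq_inv_of_mul_eq_one_left
    rw [← pow_succ, Nat.sub_add_cancel hn, pow_orderOf_eq_one]
  rw [hinv]
  have h2 : V.character (g ^ (orderOf g - 1))
      = LinearMap.trace ℂ V ((V.ρ g : V →ₗ[ℂ] V) ^ (orderOf g - 1)) := by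
    rw [FDRep.character, map_pow]
  rw [h2]
  exact conj_trace_of_pow_eq_one (V.ρ g : V →ₗ[ℂ] V) hn hρ

/-- The equivariant averaging operator `∑ x, χ_W(x) • ρ_V(x⁻¹)`. -/
private noncomputable def convMap (V W : FDRep ℂ G) : V ⟶ V where
  hom := FGModuleCat.ofHom (∑ x : G, W.character x • (V.ρ x⁻¹ : V →ₗ[ℂ] V))
  comm := by
    intro (g : G)
    have : (∑ x : G, W.character x • (V.ρ x⁻¹ : V →ₗ[ℂ] V)) * (V.ρ g : V →ₗ[ℂ] V)
        = (V.ρ g : V →ₗ[ℂ] V) * (∑ x : G, W.character x • (V.ρ x⁻¹ : V →ₗ[ℂ] V)) := by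
      rw [Finset.sum_mul, Finset.mul_sum]
      refine Fintype.sum_equiv (MulAut.conj g⁻¹).toEquiv _ _ fun x => ?_
      show W.character x • (V.ρ x⁻¹ : V →ₗ[ℂ] V) * (V.ρ g : V →ₗ[ℂ] V)
          = (V.ρ g : V →ₗ[ℂ] V) *
            (W.character (g⁻¹ * x * g⁻¹⁻¹) • (V.ρ (g⁻¹ * x * g⁻¹⁻¹)⁻¹ : V →ₗ[ℂ] V))
      rw [FDRep.char_conj, smul_mul_assoc, mul_smul_comm]
      congr 1
      rw [← map_mul, ← map_mul]
      congr 1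
      group
    apply FGModuleCat.hom_ext
    exact this

private lemma char_orthonormal' (V W : FDRep ℂ G) [Simple V] [Simple W]
    [ii : Invertible (Fintype.card G : ℂ)] :
    ⅟ (Fintype.card G : ℂ) • ∑ g : G, V.character g * W.character g⁻¹ =
      if Nonempty (V ≅ W) then (1:ℂ) else 0 := by
  rw [invOf_eq_inv, smul_eq_mul, ← Nat.card_eq_fintype_card, FDRep.char_orthonormal V W]

private lemma finrank_pos_of_simple (V : FDRep ℂ G) [Simple V] : 0 < Module.finrank ℂ V := by
  rcases Nat.eq_zero_or_pos (Module.finrank ℂ V) with h | h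
  · exfalso
    have hs : Subsingleton V := (Module.finrank_zero_iff (R := ℂ) (M := V)).mp h
    have hz : (𝟙 V : V ⟶ V) = 0 := by
      apply Action.Hom.ext
      apply FGModuleCat.hom_ext
      apply LinearMap.ext; intro v
      exact @Subsingleton.elim _ hs _ _
    exact (CategoryTheory.id_nonzero V) hz
  · exact h

/-- The convolution identity for irreducible characters. -/
private lemma conv_char (V W : FDRep ℂ G) [Simple V] [Simple W] (a : G) :
    (Module.finrank ℂ V : ℂ) * ∑ x : G, W.character x * V.character (x⁻¹ * a)
      = (if Nonempty (V ≅ W) then (Fintype.card G : ℂ) else 0) * V.character a := by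
  have hcard : (Fintype.card G : ℂ) ≠ 0 := Nat.cast_ne_zero.mpr Fintype.card_ne_zero
  letI : Invertible (Fintype.card G : ℂ) := invertibleOfNonzero hcard
  obtain ⟨c, hc⟩ := CategoryTheory.endomorphism_simple_eq_smul_id (𝕜 := ℂ) (convMap V W)
  have hhom : (∑ x : G, W.character x • (V.ρ x⁻¹ : V →ₗ[ℂ] V)) = c • LinearMap.id := by
    have h1 : (convMap V W).hom = ((c • 𝟙 V : V ⟶ V)).hom := by rw [hc]
    rw [Action.smul_hom, Action.id_hom] at h1
    have h2 := congrArg (fun f => f.hom.hom) h1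
    exact h2
  -- trace against ρ a
  have key : ∀ b : G, ∑ x : G, W.character x * V.character (x⁻¹ * b) = c * V.character b := by
    intro b
    have e1 : LinearMap.trace ℂ V
        ((∑ x : G, W.character x • (V.ρ x⁻¹ : V →ₗ[ℂ] V)) * (V.ρ b : V →ₗ[ℂ] V))
        = ∑ x : G, W.character x * V.character (x⁻¹ * b) := by
      rw [Finset.sum_mul, map_sum]
      refine Finset.sum_congr rfl fun x _ => ?_
      rw [smul_mul_assoc, map_smul, smul_eq_mul, ← map_mul]
      rfl
    have e2 : LinearMap.trace ℂ V
        ((∑ x : G, W.character x • (V.ρ x⁻¹ : V →ₗ[ℂ] V)) * (V.ρ b : V →ₗ[ℂ] V))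
        = c * V.character b := by
      rw [hhom, smul_mul_assoc, map_smul, smul_eq_mul]
      congr 1
    rw [← e1, e2]
  -- orthogonality at b = 1 determines c * finrank
  have horth : ∑ x : G, W.character x * V.character x⁻¹
      = (if Nonempty (V ≅ W) then (Fintype.card G : ℂ) else 0) := by
    have h := char_orthonormal' W V
    rw [Iso.nonempty_iso_symm] at h
    have h2 := congrArg (fun z => (Fintype.card G : ℂ) * z) h
    simp only [smul_eq_mul, ← mul_assoc, mul_invOf_self, one_mul] at h2
    rw [h2]
    by_cases hne : Nonempty (V ≅ W) <;> simp [hne]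
  have hb1 : ∑ x : G, W.character x * V.character (x⁻¹ * 1) = c * V.character 1 := key 1
  simp only [mul_one] at hb1
  have hc1 : c * (Module.finrank ℂ V : ℂ)
      = (if Nonempty (V ≅ W) then (Fintype.card G : ℂ) else 0) := by
    rw [← horth, hb1, FDRep.char_one]
  rw [key a, ← mul_assoc, mul_comm (Module.finrank ℂ V : ℂ) c, hc1]

end AuxChar


namespace GelfandPairData

variable {G : Type} [Group G] [Fintype G] (D : GelfandPairData G)


/-- A chosen irreducible representation affording `χ r`. -/
noncomputable def rep (r : Fin (D.s + 1)) : FDRep ℂ G := (D.irr r).choose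

lemma rep_simple (r : Fin (D.s + 1)) : Simple (D.rep r) := (D.irr r).choose_spec.1

lemma rep_char (r : Fin (D.s + 1)) : D.χ r = FDRep.character (D.rep r) :=
  (D.irr r).choose_spec.2

/-- The subgroup `K` as a finset. -/
noncomputable def KS : Finset G := (Set.toFinite (D.K : Set G)).toFinset

lemma mem_KS {k : G} : k ∈ D.KS ↔ k ∈ D.K := by
  rw [KS, Set.Finite.mem_toFinset, SetLike.mem_coe]

lemma finsum_K (f : G → ℂ) : ∑ᶠ k ∈ (D.K : Set G), f k = ∑ k ∈ D.KS, f k := by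
  conv_lhs => rw [← Set.Finite.coe_toFinset (Set.toFinite (D.K : Set G))]
  rw [finsum_mem_coe_finset]
  rfl

lemma card_KS : (D.KS.card : ℂ) = (Nat.card D.K : ℂ) := by
  norm_cast
  rw [KS, Set.Finite.card_toFinset]
  rw [Nat.card_eq_fintype_card]
  exact Fintype.card_congr (Equiv.setCongr rfl)

lemma cK_ne : (Nat.card D.K : ℂ) ≠ 0 := by
  have : 0 < Nat.card D.K := Nat.card_pos
  exact_mod_cast this.ne'

lemma ω_eq (r : Fin (D.s + 1)) (x : G) :
    D.ω r x = (Nat.card D.K : ℂ)⁻¹ * ∑ k ∈ D.KS, D.χ r (x⁻¹ * k) := by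
  rw [ω, finsum_K]

lemma KS_mul_left {k1 : G} (hk1 : k1 ∈ D.K) (F : G → ℂ) :
    ∑ k ∈ D.KS, F (k1 * k) = ∑ k ∈ D.KS, F k := by
  refine Finset.sum_nbij' (fun k => k1 * k) (fun k => k1⁻¹ * k) ?_ ?_ ?_ ?_ ?_
  · intro a ha
    rw [mem_KS] at *
    exact D.K.mul_mem hk1 ha
  · intro a ha
    rw [mem_KS] at *
    exact D.K.mul_mem (D.K.inv_mem hk1) ha
  · intro a _; group
  · intro a _; group
  · intro a _; rfl

lemma KS_mul_right {k2 : G} (hk2 : k2 ∈ D.K) (F : G → ℂ) :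
    ∑ k ∈ D.KS, F (k * k2) = ∑ k ∈ D.KS, F k := by
  refine Finset.sum_nbij' (fun k => k * k2) (fun k => k * k2⁻¹) ?_ ?_ ?_ ?_ ?_
  · intro a ha
    rw [mem_KS] at *
    exact D.K.mul_mem ha hk2
  · intro a ha
    rw [mem_KS] at *
    exact D.K.mul_mem ha (D.K.inv_mem hk2)
  · intro a _; group
  · intro a _; group
  · intro a _; rfl

lemma mult_one' (r : Fin (D.s + 1)) :
    ∑ k ∈ D.KS, D.χ r k = (Nat.card D.K : ℂ) := by
  have h := D.mult_one r
  rw [finsum_K] at h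
  have hc := D.cK_ne
  calc ∑ k ∈ D.KS, D.χ r k
      = (Nat.card D.K : ℂ) * ((Nat.card D.K : ℂ)⁻¹ * ∑ k ∈ D.KS, D.χ r k) := by
        field_simp
    _ = (Nat.card D.K : ℂ) := by rw [h, mul_one]

lemma ω_left {r : Fin (D.s + 1)} {k1 x : G} (hk1 : k1 ∈ D.K) :
    D.ω r (k1 * x) = D.ω r x := by
  rw [ω_eq, ω_eq]
  congr 1
  have h1 : ∀ k : G, D.χ r ((k1 * x)⁻¹ * k) = (fun m => D.χ r (x⁻¹ * m)) (k1⁻¹ * k) := by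
    intro k
    simp only
    congr 1
    group
  rw [Finset.sum_congr rfl (fun k _ => h1 k)]
  exact D.KS_mul_left (D.K.inv_mem hk1) (fun m => D.χ r (x⁻¹ * m))

lemma ω_right {r : Fin (D.s + 1)} {x k2 : G} (hk2 : k2 ∈ D.K) :
    D.ω r (x * k2) = D.ω r x := by
  rw [ω_eq, ω_eq]
  congr 1
  have h1 : ∀ k : G, D.χ r ((x * k2)⁻¹ * k) = (fun m => D.χ r (x⁻¹ * m)) (k * k2⁻¹) := by
    intro k
    simp only
    rw [rep_char]
    have h2 : (x * k2)⁻¹ * k = k2⁻¹ * (x⁻¹ * k) := by group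
    rw [h2, FDRep.char_mul_comm]
    congr 1
    group
  rw [Finset.sum_congr rfl (fun k _ => h1 k)]
  exact D.KS_mul_right (D.K.inv_mem hk2) (fun m => D.χ r (x⁻¹ * m))

lemma g_mem_DC (r : Fin (D.s + 1)) : D.g r ∈ D.DC r :=
  ⟨1, D.K.one_mem, 1, D.K.one_mem, by group⟩

lemma ω_const_DC {j r : Fin (D.s + 1)} {x : G} (hx : x ∈ D.DC r) :
    D.ω j x = D.ω j (D.g r) := by
  obtain ⟨k1, h1, k2, h2, rfl⟩ := hx
  rw [D.ω_right h2, D.ω_left h1]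

/-- Double cosets as finsets. -/
noncomputable def DCF (r : Fin (D.s + 1)) : Finset G := (Set.toFinite (D.DC r)).toFinset

lemma mem_DCF {r : Fin (D.s + 1)} {x : G} : x ∈ D.DCF r ↔ x ∈ D.DC r := by
  rw [DCF, Set.Finite.mem_toFinset]

lemma card_DCF (r : Fin (D.s + 1)) : ((D.DC r).ncard : ℂ) = ((D.DCF r).card : ℂ) := by
  norm_cast
  rw [DCF, Set.Finite.card_toFinset, Set.ncard_eq_toFinset_card']
  simp [Set.toFinset_card]

lemma partition (F : G → ℂ) :
    ∑ x : G, F x = ∑ r : Fin (D.s + 1), ∑ x ∈ D.DCF r, F x := by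
  classical
  have hidx : ∀ x : G, x ∈ D.DC (D.coset_cover x).choose := fun x => (D.coset_cover x).choose_spec
  have huniq : ∀ (x : G) (r : Fin (D.s + 1)), x ∈ D.DC r → (D.coset_cover x).choose = r := by
    intro x r hr
    by_contra hne
    exact Set.disjoint_left.mp (D.coset_disjoint _ r hne) (hidx x) hr
  rw [← Finset.sum_fiberwise Finset.univ (fun x => (D.coset_cover x).choose) F]
  refine Finset.sum_congr rfl fun r _ => ?_
  refine Finset.sum_congr ?_ fun _ _ => rfl
  ext x
  simp only [Finset.mem_filter, Finset.mem_univ, true_and, mem_DCF]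
  constructor
  · rintro rfl; exact hidx x
  · intro hx; exact huniq x r hx

end GelfandPairData

namespace GelfandPairData

variable {G : Type} [Group G] [Fintype G] (D : GelfandPairData G)

lemma d_eq_finrank (r : Fin (D.s + 1)) :
    (D.d r : ℂ) = (Module.finrank ℂ (D.rep r) : ℂ) := by
  rw [← D.dim_eq r, rep_char, FDRep.char_one]

lemma d_ne (r : Fin (D.s + 1)) : (D.d r : ℂ) ≠ 0 := by
  haveI := D.rep_simple r
  rw [d_eq_finrank]
  exact_mod_cast (finrank_pos_of_simple (D.rep r)).ne'

lemma iso_iff (i j : Fin (D.s + 1)) : Nonempty (D.rep i ≅ D.rep j) ↔ i = j := by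
  constructor
  · rintro ⟨e⟩
    apply D.inj
    rw [rep_char, rep_char]
    exact FDRep.char_iso e
  · rintro rfl; exact ⟨Iso.refl _⟩

lemma conj_ω (j : Fin (D.s + 1)) (x : G) :
    (starRingEnd ℂ) (D.ω j x)
      = (Nat.card D.K : ℂ)⁻¹ * ∑ k' ∈ D.KS, D.χ j (k'⁻¹ * x) := by
  rw [ω_eq, map_mul, map_inv₀, map_natCast, map_sum]
  congr 1
  refine Finset.sum_congr rfl fun k' _ => ?_
  rw [rep_char, conj_char]
  congr 1
  group

lemma conv_step (i j : Fin (D.s + 1)) (a : G) :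
    (D.d i : ℂ) * ∑ x : G, D.χ j x * D.χ i (x⁻¹ * a)
      = (if i = j then (Fintype.card G : ℂ) else 0) * D.χ i a := by
  haveI := D.rep_simple i
  haveI := D.rep_simple j
  have h := conv_char (D.rep i) (D.rep j) a
  rw [← rep_char, ← rep_char, ← d_eq_finrank] at h
  rw [h]
  by_cases hij : i = j
  · rw [if_pos ((D.iso_iff i j).mpr hij), if_pos hij]
  · rw [if_neg (fun hc => hij ((D.iso_iff i j).mp hc)), if_neg hij]

lemma GO (i j : Fin (D.s + 1)) :
    (D.d i : ℂ) * ∑ x : G, D.ω i x * (starRingEnd ℂ) (D.ω j x)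
      = if i = j then (Fintype.card G : ℂ) else 0 := by
  have hc := D.cK_ne
  set cK := (Nat.card D.K : ℂ) with hcK
  have e1 : ∀ x : G, D.ω i x * (starRingEnd ℂ) (D.ω j x)
      = cK⁻¹ * cK⁻¹ * ∑ k ∈ D.KS, ∑ k' ∈ D.KS, D.χ i (x⁻¹ * k) * D.χ j (k'⁻¹ * x) := by
    intro x
    rw [D.ω_eq i x, D.conj_ω j x, mul_mul_mul_comm]
    congr 1
    rw [Finset.sum_mul_sum]
  rw [Finset.sum_congr rfl (fun x _ => e1 x), ← Finset.mul_sum]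
  have swap : ∑ x : G, ∑ k ∈ D.KS, ∑ k' ∈ D.KS, D.χ i (x⁻¹ * k) * D.χ j (k'⁻¹ * x)
      = ∑ k ∈ D.KS, ∑ k' ∈ D.KS, ∑ x : G, D.χ i (x⁻¹ * k) * D.χ j (k'⁻¹ * x) := by
    rw [Finset.sum_comm]
    exact Finset.sum_congr rfl fun k _ => Finset.sum_comm
  rw [swap]
  set S := ∑ k ∈ D.KS, ∑ k' ∈ D.KS, ∑ x : G, D.χ i (x⁻¹ * k) * D.χ j (k'⁻¹ * x) with hS
  have hinner : ∀ k k' : G, k' ∈ D.K → (D.d i : ℂ) * ∑ x : G, D.χ i (x⁻¹ * k) * D.χ j (k'⁻¹ * x)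
      = (if i = j then (Fintype.card G : ℂ) else 0) * D.χ i (k'⁻¹ * k) := by
    intro k k' _
    have hre : ∑ x : G, D.χ i (x⁻¹ * k) * D.χ j (k'⁻¹ * x)
        = ∑ y : G, D.χ j y * D.χ i (y⁻¹ * (k'⁻¹ * k)) := by
      refine (Fintype.sum_equiv (Equiv.mulLeft k')
        (fun y => D.χ j y * D.χ i (y⁻¹ * (k'⁻¹ * k)))
        (fun x => D.χ i (x⁻¹ * k) * D.χ j (k'⁻¹ * x)) fun y => ?_).symm
      show D.χ j y * D.χ i (y⁻¹ * (k'⁻¹ * k))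
          = D.χ i ((k' * y)⁻¹ * k) * D.χ j (k'⁻¹ * (k' * y))
      have h1 : (k' * y)⁻¹ * k = y⁻¹ * (k'⁻¹ * k) := by group
      have h2 : k'⁻¹ * (k' * y) = y := by group
      rw [h1, h2, mul_comm]
    rw [hre]
    exact D.conv_step i j (k'⁻¹ * k)
  have hSd : (D.d i : ℂ) * S
      = (if i = j then (Fintype.card G : ℂ) else 0) * (cK * cK) := by
    rw [hS, Finset.mul_sum]
    have : ∀ k ∈ D.KS, (D.d i : ℂ) * ∑ k' ∈ D.KS, ∑ x : G, D.χ i (x⁻¹ * k) * D.χ j (k'⁻¹ * x)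
        = ∑ k' ∈ D.KS, (if i = j then (Fintype.card G : ℂ) else 0) * D.χ i (k'⁻¹ * k) := by
      intro k _
      rw [Finset.mul_sum]
      refine Finset.sum_congr rfl fun k' hk' => ?_
      exact hinner k k' (D.mem_KS.mp hk')
    rw [Finset.sum_congr rfl this]
    have hsum2 : ∑ k ∈ D.KS, ∑ k' ∈ D.KS,
        (if i = j then (Fintype.card G : ℂ) else 0) * D.χ i (k'⁻¹ * k)
        = (if i = j then (Fintype.card G : ℂ) else 0) * (cK * cK) := by
      rw [Finset.sum_comm]
      have hin : ∀ k' ∈ D.KS, ∑ k ∈ D.KS,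
          (if i = j then (Fintype.card G : ℂ) else 0) * D.χ i (k'⁻¹ * k)
          = (if i = j then (Fintype.card G : ℂ) else 0) * cK := by
        intro k' hk'
        rw [← Finset.mul_sum]
        congr 1
        rw [D.KS_mul_left (D.K.inv_mem (D.mem_KS.mp hk')) (D.χ i), D.mult_one' i]
      rw [Finset.sum_congr rfl hin, Finset.sum_const, nsmul_eq_mul, card_KS]
      ring
    exact hsum2
  have hfin : (D.d i : ℂ) * (cK⁻¹ * cK⁻¹ * S) = cK⁻¹ * cK⁻¹ * ((D.d i : ℂ) * S) := by ring
  rw [hfin, hSd]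
  rw [show cK⁻¹ * cK⁻¹ * ((if i = j then (Fintype.card G : ℂ) else 0) * (cK * cK))
      = (if i = j then (Fintype.card G : ℂ) else 0) * ((cK⁻¹ * cK) * (cK⁻¹ * cK)) from by ring]
  rw [inv_mul_cancel₀ hc]
  ring

lemma FO (i j : Fin (D.s + 1)) :
    (D.d i : ℂ) * ∑ r : Fin (D.s + 1),
        ((D.DC r).ncard : ℂ) * (D.ω i (D.g r) * (starRingEnd ℂ) (D.ω j (D.g r)))
      = if i = j then (Fintype.card G : ℂ) else 0 := by
  rw [← D.GO i j]
  congr 1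
  rw [D.partition (fun x => D.ω i x * (starRingEnd ℂ) (D.ω j x))]
  refine (Finset.sum_congr rfl fun r _ => ?_).symm
  have hconst : ∀ x ∈ D.DCF r, D.ω i x * (starRingEnd ℂ) (D.ω j x)
      = D.ω i (D.g r) * (starRingEnd ℂ) (D.ω j (D.g r)) := by
    intro x hx
    rw [D.ω_const_DC (D.mem_DCF.mp hx), D.ω_const_DC (D.mem_DCF.mp hx)]
  rw [Finset.sum_congr rfl hconst, Finset.sum_const, nsmul_eq_mul, card_DCF]

end GelfandPairData

namespace GelfandPairData

variable {G : Type} [Group G] [Fintype G] (D : GelfandPairData G)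

/-- The matrix whose orthogonality encodes the first orthogonality relation. -/
noncomputable def Amat : Matrix (Fin (D.s + 1)) (Fin (D.s + 1)) ℂ :=
  fun i r => (D.d i : ℂ) * ((D.DC r).ncard : ℂ) * D.ω i (D.g r) / (Fintype.card G : ℂ)

noncomputable def Bmat : Matrix (Fin (D.s + 1)) (Fin (D.s + 1)) ℂ :=
  fun r j => (starRingEnd ℂ) (D.ω j (D.g r))

lemma hAB : D.Amat * D.Bmat = 1 := by
  ext i j
  rw [Matrix.mul_apply, Matrix.one_apply]
  have h := D.FO i j
  have hcard : (Fintype.card G : ℂ) ≠ 0 := Nat.cast_ne_zero.mpr Fintype.card_ne_zero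
  have e1 : ∑ r : Fin (D.s + 1), D.Amat i r * D.Bmat r j
      = (Fintype.card G : ℂ)⁻¹ * ((D.d i : ℂ) * ∑ r : Fin (D.s + 1),
          ((D.DC r).ncard : ℂ) * (D.ω i (D.g r) * (starRingEnd ℂ) (D.ω j (D.g r)))) := by
    rw [Finset.mul_sum, Finset.mul_sum]
    refine Finset.sum_congr rfl fun r _ => ?_
    rw [Amat, Bmat]
    field_simp
  rw [e1, h]
  by_cases hij : i = j
  · rw [if_pos hij, if_pos hij, inv_mul_cancel₀ hcard]
  · rw [if_neg hij, if_neg hij, mul_zero]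

lemma DO (r u : Fin (D.s + 1)) :
    ∑ j : Fin (D.s + 1), D.Bmat r j * D.Amat j u = if r = u then (1 : ℂ) else 0 := by
  have hBA : D.Bmat * D.Amat = 1 := mul_eq_one_comm.mp D.hAB
  have := congrFun (congrFun hBA r) u
  rw [Matrix.mul_apply] at this
  rw [this, Matrix.one_apply]

end GelfandPairData

/-- **Lemma (steinsat2)**: `Σ_j L_t(ω_i, ω_j) ω_j(g_u) = ω_t(g_u) ω_i(g_u)`; consequently the
exchangeable pair built from the Plancherel measure and `L_t` for the statistic
`W(i) = (|K_u|/|K|)^{1/2} ω_i(g_u)` satisfies `E(W'|W) = ω_t(g_u) W`. -/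
theorem stmt14 {G : Type} [Group G] [Fintype G] (D : GelfandPairData G)
    (t : Fin (D.s + 1)) (ht : ∀ x : G, (D.ω t x).im = 0) (u : Fin (D.s + 1)) :
    ∀ i : Fin (D.s + 1),
      (∑ j : Fin (D.s + 1), D.L t i j * D.ω j (D.g u)) = D.ω t (D.g u) * D.ω i (D.g u) := by
  intro i
  have hcard : (Fintype.card G : ℂ) ≠ 0 := Nat.cast_ne_zero.mpr Fintype.card_ne_zero
  have hcu : (((D.DC u).ncard : ℕ) : ℂ) ≠ 0 := by
    have hpos : 0 < (D.DC u).ncard :=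
      (Set.ncard_pos (Set.toFinite _)).mpr ⟨D.g u, D.g_mem_DC u⟩
    exact_mod_cast hpos.ne'
  calc ∑ j : Fin (D.s + 1), D.L t i j * D.ω j (D.g u)
      = ∑ j : Fin (D.s + 1), ∑ r : Fin (D.s + 1),
          ((D.DC r).ncard : ℂ) * D.ω i (D.g r) * D.ω t (D.g r) *
            ((D.Bmat r j * D.Amat j u) / ((D.DC u).ncard : ℂ)) := by
        refine Finset.sum_congr rfl fun j _ => ?_
        rw [GelfandPairData.L, Finset.mul_sum, Finset.sum_mul]
        refine Finset.sum_congr rfl fun r _ => ?_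
        rw [GelfandPairData.Bmat, GelfandPairData.Amat]
        field_simp
    _ = ∑ r : Fin (D.s + 1), ∑ j : Fin (D.s + 1),
          ((D.DC r).ncard : ℂ) * D.ω i (D.g r) * D.ω t (D.g r) *
            ((D.Bmat r j * D.Amat j u) / ((D.DC u).ncard : ℂ)) := Finset.sum_comm
    _ = ∑ r : Fin (D.s + 1), ((D.DC r).ncard : ℂ) * D.ω i (D.g r) * D.ω t (D.g r) *
          ((if r = u then (1:ℂ) else 0) / ((D.DC u).ncard : ℂ)) := by
        refine Finset.sum_congr rfl fun r _ => ?_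
        rw [← D.DO r u, Finset.sum_div, Finset.mul_sum]
    _ = ((D.DC u).ncard : ℂ) * D.ω i (D.g u) * D.ω t (D.g u) * (1 / ((D.DC u).ncard : ℂ)) := by
        have hterm : ∀ r : Fin (D.s + 1),
            ((D.DC r).ncard : ℂ) * D.ω i (D.g r) * D.ω t (D.g r) *
              ((if r = u then (1:ℂ) else 0) / ((D.DC u).ncard : ℂ))
            = if r = u then ((D.DC u).ncard : ℂ) * D.ω i (D.g u) * D.ω t (D.g u) *
                (1 / ((D.DC u).ncard : ℂ)) else 0 := by
          intro r
          by_cases hr : r = u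
          · subst hr; rw [if_pos rfl, if_pos rfl]
          · rw [if_neg hr, if_neg hr]
            simp
        rw [Finset.sum_congr rfl fun r _ => hterm r]
        rw [Finset.sum_ite_eq' Finset.univ u]
        rw [if_pos (Finset.mem_univ u)]
    _ = D.ω t (D.g u) * D.ω i (D.g u) := by
        field_simp
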